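/- The sum over v ∈ S of ζ_v equals n·(m − 1) + 2ℓ_S/m. -/

import Mathlib

open Finset
open scoped InnerProductSpace

/-- Coordinates of a finite sum in `EuclideanSpace`. -/
lemma euclid_sum_apply {ι κ : Type*} [Fintype ι] (S : Finset κ)
    (x : κ → EuclideanSpace ℝ ι) (i : ι) :
    (∑ v ∈ S, x v) i = ∑ v ∈ S, x v i := by
  induction S using Finset.cons_induction with
  | empty => rfl
  | cons a s ha ih => rw [Finset.sum_cons, Finset.sum_cons, ← ih]; rfl

/-- The mean-subtracted sum of squares identity. -/
lemma sum_sq_sub_avg {κ : Type*} (S : Finset κ) (m : ℕ) (hS : S.card = m)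
    (hm : 1 ≤ m) (f : κ → ℝ) :
    ∑ v ∈ S, (f v - (m : ℝ)⁻¹ * ∑ u ∈ S, f u) ^ 2
      = ∑ v ∈ S, (f v) ^ 2 - (m : ℝ)⁻¹ * (∑ v ∈ S, f v) ^ 2 := by
  have hm0 : (m : ℝ) ≠ 0 := by positivity
  have : ∀ v ∈ S, (f v - (m : ℝ)⁻¹ * ∑ u ∈ S, f u) ^ 2
      = (f v) ^ 2 - 2 * (m : ℝ)⁻¹ * (∑ u ∈ S, f u) * f v
        + ((m : ℝ)⁻¹ * ∑ u ∈ S, f u) ^ 2 := by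
    intro v _; ring
  rw [Finset.sum_congr rfl this, Finset.sum_add_distrib, Finset.sum_sub_distrib,
    Finset.sum_const, ← Finset.mul_sum, hS, nsmul_eq_mul]
  field_simp
  ring

/-- The number of non-loop edges incident to `v` equals the degree of `v`. -/
lemma incident_card {V E : Type*} [Fintype V] [DecidableEq V] [Fintype E] [DecidableEq E]
    (G : SimpleGraph V) [DecidableRel G.Adj]
    (tail head : E → V)
    (hadj : ∀ e : E, tail e ≠ head e → G.Adj (tail e) (head e))
    (hinj : ∀ e₁ e₂ : E, tail e₁ ≠ head e₁ → tail e₂ ≠ head e₂ →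
      (s(tail e₁, head e₁) : Sym2 V) = s(tail e₂, head e₂) → e₁ = e₂)
    (hsurj : ∀ u v : V, G.Adj u v → ∃ e : E, (s(tail e, head e) : Sym2 V) = s(u, v))
    (v : V) :
    (Finset.univ.filter fun e : E => (head e = v ∨ tail e = v) ∧ tail e ≠ head e).card
      = G.degree v := by
  rw [← SimpleGraph.card_neighborFinset_eq_degree]
  have key : ∀ e : E, (head e = v ∨ tail e = v) → tail e ≠ head e →
      (s(tail e, head e) : Sym2 V) = s(v, if tail e = v then head e else tail e) := by
    intro e hor hne
    by_cases ht : tail e = v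
    · simp [ht]
    · have hh : head e = v := by tauto
      simp only [ht, if_false, hh]
      exact Sym2.eq_swap
  apply Finset.card_bij (fun e _ => if tail e = v then head e else tail e)
  · intro e he
    simp only [Finset.mem_filter, Finset.mem_univ, true_and] at he
    obtain ⟨hor, hne⟩ := he
    rw [SimpleGraph.mem_neighborFinset]
    by_cases ht : tail e = v
    · simpa [ht] using (ht ▸ hadj e hne)
    · have hh : head e = v := by tauto
      simp only [ht, if_false]
      exact (hh ▸ (hadj e hne)).symm
  · intro e₁ h₁ e₂ h₂ heq
    simp only [Finset.mem_filter, Finset.mem_univ, true_and] at h₁ h₂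
    apply hinj e₁ e₂ h₁.2 h₂.2
    rw [key e₁ h₁.1 h₁.2, key e₂ h₂.1 h₂.2, heq]
  · intro u hu
    rw [SimpleGraph.mem_neighborFinset] at hu
    obtain ⟨e, he⟩ := hsurj v u hu
    have hcase := (Sym2.eq_iff).mp he
    have hne : tail e ≠ head e := by
      intro h
      apply hu.ne
      rcases hcase with ⟨h1, h2⟩ | ⟨h1, h2⟩
      · rw [← h1, h, h2]
      · rw [← h2, ← h, h1]
    refine ⟨e, ?_, ?_⟩
    · simp only [Finset.mem_filter, Finset.mem_univ, true_and]
      exact ⟨by tauto, hne⟩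
    · rcases hcase with ⟨h1, h2⟩ | ⟨h1, h2⟩
      · simp [h1, h2]
      · have ht : tail e ≠ v := by rw [h1]; exact fun h => hu.ne h.symm
        rw [if_neg ht, h1]

/-- The number of non-loop edges with both endpoints in `S`. -/
lemma both_card {V E : Type*} [Fintype V] [DecidableEq V] [Fintype E] [DecidableEq E]
    (G : SimpleGraph V) [DecidableRel G.Adj]
    (tail head : E → V)
    (hadj : ∀ e : E, tail e ≠ head e → G.Adj (tail e) (head e))
    (hinj : ∀ e₁ e₂ : E, tail e₁ ≠ head e₁ → tail e₂ ≠ head e₂ →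
      (s(tail e₁, head e₁) : Sym2 V) = s(tail e₂, head e₂) → e₁ = e₂)
    (hsurj : ∀ u v : V, G.Adj u v → ∃ e : E, (s(tail e, head e) : Sym2 V) = s(u, v))
    (S : Finset V) :
    (Finset.univ.filter fun e : E =>
        (tail e ∈ S ∧ tail e ≠ head e) ∧ head e ∈ S).card
      = (G.edgeFinset.filter fun p => ∀ a ∈ p, a ∈ S).card := by
  apply Finset.card_bij (fun e _ => (s(tail e, head e) : Sym2 V))
  · intro e he
    simp only [Finset.mem_filter, Finset.mem_univ, true_and] at he
    obtain ⟨⟨ht, hne⟩, hh⟩ := he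
    simp only [Finset.mem_filter, SimpleGraph.mem_edgeFinset, SimpleGraph.mem_edgeSet]
    refine ⟨hadj e hne, ?_⟩
    intro a ha
    rcases Sym2.mem_iff.mp ha with h | h <;> rw [h] <;> assumption
  · intro e₁ h₁ e₂ h₂ heq
    simp only [Finset.mem_filter, Finset.mem_univ, true_and] at h₁ h₂
    exact hinj e₁ e₂ h₁.1.2 h₂.1.2 heq
  · intro p hp
    simp only [Finset.mem_filter, SimpleGraph.mem_edgeFinset] at hp
    obtain ⟨hpe, hpS⟩ := hp
    induction p with
    | h u w =>
      rw [SimpleGraph.mem_edgeSet] at hpe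
      obtain ⟨e, he⟩ := hsurj u w hpe
      have hne : tail e ≠ head e := by
        intro h
        rcases Sym2.eq_iff.mp he with ⟨h1, h2⟩ | ⟨h1, h2⟩ <;>
          exact hpe.ne (by rw [← h1, h, h2])
      refine ⟨e, ?_, he⟩
      simp only [Finset.mem_filter, Finset.mem_univ, true_and]
      have htm : tail e ∈ (s(u, w) : Sym2 V) := by rw [← he]; exact Sym2.mem_mk_left _ _
      have hhm : head e ∈ (s(u, w) : Sym2 V) := by rw [← he]; exact Sym2.mem_mk_right _ _
      exact ⟨⟨hpS _ htm, hne⟩, hpS _ hhm⟩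

/-- The sum over `v ∈ S` of `ζ_v` equals `n·(m − 1) + 2ℓ_S/m`. -/
theorem sum_zeta
    {V E : Type*} [Fintype V] [DecidableEq V] [Fintype E] [DecidableEq E]
    (G : SimpleGraph V) [DecidableRel G.Adj]
    (tail head : E → V)
    (hadj : ∀ e : E, tail e ≠ head e → G.Adj (tail e) (head e))
    (hinj : ∀ e₁ e₂ : E, tail e₁ ≠ head e₁ → tail e₂ ≠ head e₂ →
      (s(tail e₁, head e₁) : Sym2 V) = s(tail e₂, head e₂) → e₁ = e₂)
    (hsurj : ∀ u v : V, G.Adj u v → ∃ e : E, (s(tail e, head e) : Sym2 V) = s(u, v))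
    (hloops : ∀ v : V, (Finset.univ.filter fun e : E => tail e = v ∧ head e = v).card
        = Fintype.card V - G.degree v)
    (M : ℝ) (hM : 0 < M)
    (x : V → EuclideanSpace ℝ (E ⊕ V))
    (hxE : ∀ (v : V) (e : E),
      x v (Sum.inl e) = if head e = v then -1 else if tail e = v then 1 else 0)
    (hxV : ∀ v u : V, x v (Sum.inr u) = if u = v then M else 0)
    (S : Finset V) (m : ℕ) (hS : S.card = m)
    (c : EuclideanSpace ℝ (E ⊕ V)) (hc : c = (m : ℝ)⁻¹ • ∑ v ∈ S, x v)
    (hm : 1 ≤ m)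
    (z : V → EuclideanSpace ℝ (E ⊕ V)) (hz : ∀ v : V, z v = x v - c)
    (ζ : V → ℝ) (hζ : ∀ v : V, ζ v = ∑ e : E, (z v (Sum.inl e)) ^ 2)
    (ℓ : ℕ) (hℓ : ℓ = (G.edgeFinset.filter fun p => ∀ a ∈ p, a ∈ S).card)
 :
    ∑ v ∈ S, ζ v = (Fintype.card V : ℝ) * ((m : ℝ) - 1) + 2 * (ℓ : ℝ) / m := by
  classical
  have hm0 : (m : ℝ) ≠ 0 := by positivity
  set n := Fintype.card V with hn
  -- abbreviations
  set a : V → E → ℝ := fun v e => x v (Sum.inl e) with ha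
  set H : E → ℝ := fun e => if head e ∈ S then 1 else 0 with hH
  set T : E → ℝ := fun e => if tail e ∈ S ∧ tail e ≠ head e then 1 else 0 with hT
  -- coordinates of z
  have hzcoord : ∀ (v : V) (e : E),
      z v (Sum.inl e) = a v e - (m : ℝ)⁻¹ * ∑ u ∈ S, a u e := by
    intro v e
    have : z v (Sum.inl e) = x v (Sum.inl e) - c (Sum.inl e) := by rw [hz]; rfl
    rw [this, hc]
    have : ((m : ℝ)⁻¹ • ∑ v ∈ S, x v) (Sum.inl e)
        = (m : ℝ)⁻¹ * (∑ v ∈ S, x v) (Sum.inl e) := rfl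
    rw [this, euclid_sum_apply]
  -- sum over v in S of a v e squared
  have hA : ∀ e : E, ∑ v ∈ S, (a v e) ^ 2 = H e + T e := by
    intro e
    have hpt : ∀ v : V, (a v e) ^ 2
        = (if v = head e then (1 : ℝ) else 0)
          + (if tail e ≠ head e then (if v = tail e then (1 : ℝ) else 0) else 0) := by
      intro v
      simp only [ha, hxE]
      by_cases h1 : head e = v <;> by_cases h2 : tail e = v <;>
        simp [h1, h2, eq_comm] <;> (try split_ifs) <;> norm_num <;> tauto
    rw [Finset.sum_congr rfl (fun v _ => hpt v), Finset.sum_add_distrib,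
      Finset.sum_ite_eq' S (head e) (fun _ => (1:ℝ))]
    simp only [hH, hT]
    by_cases hne : tail e ≠ head e
    · simp [hne, Finset.sum_ite_eq' S (tail e) (fun _ => (1:ℝ))]
    · simp [hne]
  -- sum over v in S of a v e
  have hB : ∀ e : E, ∑ v ∈ S, a v e = T e - H e := by
    intro e
    have hpt : ∀ v : V, a v e
        = (if tail e ≠ head e then (if v = tail e then (1 : ℝ) else 0) else 0)
          - (if v = head e then (1 : ℝ) else 0) := by
      intro v
      simp only [ha, hxE]
      by_cases h1 : head e = v <;> by_cases h2 : tail e = v <;>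
        simp [h1, h2, eq_comm] <;> (try split_ifs) <;> norm_num <;> tauto
    rw [Finset.sum_congr rfl (fun v _ => hpt v), Finset.sum_sub_distrib,
      Finset.sum_ite_eq' S (head e) (fun _ => (1:ℝ))]
    simp only [hH, hT]
    by_cases hne : tail e ≠ head e
    · simp [hne, Finset.sum_ite_eq' S (tail e) (fun _ => (1:ℝ))]
    · simp [hne]
  -- per-vertex incidence count
  have hAv : ∀ v ∈ S, ∑ e : E, (a v e) ^ 2 = (n : ℝ) := by
    intro v _
    have hpt : ∀ e : E, (a v e) ^ 2
        = if head e = v ∨ tail e = v then (1 : ℝ) else 0 := by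
      intro e
      simp only [ha, hxE]
      split_ifs <;> norm_num <;> tauto
    rw [Finset.sum_congr rfl (fun e _ => hpt e), Finset.sum_boole]
    norm_cast
    have hsplit := Finset.card_filter_add_card_filter_not
      (s := Finset.univ.filter fun e : E => head e = v ∨ tail e = v)
      (fun e : E => tail e = head e)
    rw [Finset.filter_filter, Finset.filter_filter] at hsplit
    have e1 : (Finset.univ.filter fun e : E =>
        (head e = v ∨ tail e = v) ∧ tail e = head e)
        = Finset.univ.filter fun e : E => tail e = v ∧ head e = v := by
      apply Finset.filter_congr
      intro e _
      constructor
      · rintro ⟨h1, h2⟩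
        rcases h1 with h | h
        · exact ⟨h2.trans h, h⟩
        · exact ⟨h, h2.symm.trans h⟩
      · rintro ⟨h1, h2⟩; exact ⟨Or.inl h2, h1.trans h2.symm⟩
    rw [e1, hloops v] at hsplit
    have e2 : (Finset.univ.filter fun e : E =>
        (head e = v ∨ tail e = v) ∧ ¬ tail e = head e).card = G.degree v :=
      incident_card G tail head hadj hinj hsurj v
    rw [e2] at hsplit
    have hd : G.degree v < n := SimpleGraph.degree_lt_card_verts (G := G) v
    omega
  -- total sum of H + T
  have hsumHT : ∑ e : E, (H e + T e) = (m : ℝ) * n := by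
    calc ∑ e : E, (H e + T e) = ∑ e : E, ∑ v ∈ S, (a v e) ^ 2 := by
          exact Finset.sum_congr rfl (fun e _ => (hA e).symm)
      _ = ∑ v ∈ S, ∑ e : E, (a v e) ^ 2 := Finset.sum_comm
      _ = ∑ v ∈ S, (n : ℝ) := Finset.sum_congr rfl hAv
      _ = (m : ℝ) * n := by rw [Finset.sum_const, hS, nsmul_eq_mul]
  -- sum of products
  have hsumTH : ∑ e : E, T e * H e = (ℓ : ℝ) := by
    have hpt : ∀ e : E, T e * H e
        = if (tail e ∈ S ∧ tail e ≠ head e) ∧ head e ∈ S then (1 : ℝ) else 0 := by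
      intro e
      simp only [hT, hH]
      split_ifs <;> norm_num <;> tauto
    rw [Finset.sum_congr rfl (fun e _ => hpt e), Finset.sum_boole,
      both_card G tail head hadj hinj hsurj S, hℓ]
  -- squares identity
  have hsq : ∀ e : E, (T e - H e) ^ 2 = H e + T e - 2 * (T e * H e) := by
    intro e
    simp only [hT, hH]
    split_ifs <;> norm_num
  -- main computation
  calc ∑ v ∈ S, ζ v
      = ∑ v ∈ S, ∑ e : E, (a v e - (m : ℝ)⁻¹ * ∑ u ∈ S, a u e) ^ 2 := by
        refine Finset.sum_congr rfl fun v _ => ?_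
        rw [hζ]
        exact Finset.sum_congr rfl fun e _ => by rw [hzcoord]
    _ = ∑ e : E, ∑ v ∈ S, (a v e - (m : ℝ)⁻¹ * ∑ u ∈ S, a u e) ^ 2 :=
        Finset.sum_comm
    _ = ∑ e : E, (∑ v ∈ S, (a v e) ^ 2 - (m : ℝ)⁻¹ * (∑ v ∈ S, a v e) ^ 2) := by
        exact Finset.sum_congr rfl fun e _ =>
          sum_sq_sub_avg S m hS hm (fun v => a v e)
    _ = ∑ e : E, ((H e + T e) - (m : ℝ)⁻¹ * (H e + T e - 2 * (T e * H e))) := by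
        refine Finset.sum_congr rfl fun e _ => ?_
        rw [hA e, hB e, hsq e]
    _ = ∑ e : E, (H e + T e) - (m : ℝ)⁻¹ *
          (∑ e : E, (H e + T e) - 2 * ∑ e : E, T e * H e) := by
        rw [Finset.sum_sub_distrib, ← Finset.mul_sum, Finset.sum_sub_distrib,
          ← Finset.mul_sum]
    _ = (n : ℝ) * ((m : ℝ) - 1) + 2 * (ℓ : ℝ) / m := by
        rw [hsumHT, hsumTH]
        field_simp
        ring
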